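/- For every d ≥ 2, the unit d-hypocycloid region H_d ⊂ ℂ is closed under complex multiplication: if z₁ ∈ H_d and z₂ ∈ H_d, then z₁·z₂ ∈ H_d. Equivalently, H_d is idempotent with respect to the Minkowski product, H_d ⊠ H_d = H_d. -/

import Mathlib

open Real Set

def Hypocycloid (d : ℕ) : Set ℂ :=
  { z | ∃ s θ : ℝ, s ∈ Set.Icc (0 : ℝ) 1 ∧ θ ∈ Set.Icc (0 : ℝ) (2 * Real.pi) ∧
      z = (s : ℂ) * ((((d - 1 : ℝ) / d) * Real.cos θ + (1 / d : ℝ) * Real.cos ((d - 1 : ℝ) * θ) : ℝ) +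
        ((((d - 1 : ℝ) / d) * Real.sin θ - (1 / d : ℝ) * Real.sin ((d - 1 : ℝ) * θ) : ℝ)) * Complex.I) }

namespace HypoAux

noncomputable def Q (d : ℕ) (ψ : ℝ) : ℝ :=
  ((d : ℝ) - 1) ^ 2 + 2 * ((d : ℝ) - 1) * Real.cos (d * ψ) + 1

noncomputable def R (d : ℕ) (ψ : ℝ) : ℝ := Real.sqrt (Q d ψ) / d

noncomputable def A (d : ℕ) (ψ : ℝ) : ℝ :=
  - Real.arctan (Real.sin (d * ψ) / (((d : ℝ) - 1) + Real.cos (d * ψ)))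

noncomputable def L (d : ℕ) (ψ : ℝ) : ℝ := ψ + A d ψ

noncomputable def g (d : ℕ) (ψ : ℝ) : ℝ := Real.log d - Real.log (Q d ψ) / 2

noncomputable def L' (d : ℕ) (ψ : ℝ) : ℝ :=
  ((d : ℝ) - 1) * ((d : ℝ) - 2) * (1 - Real.cos (d * ψ)) / Q d ψ

noncomputable def g' (d : ℕ) (ψ : ℝ) : ℝ :=
  ((d : ℝ) - 1) * d * Real.sin (d * ψ) / Q d ψ

section basic

variable {d : ℕ}

lemma m_ge (hd : 3 ≤ d) : (2 : ℝ) ≤ (d : ℝ) - 1 := by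
  have : (3 : ℝ) ≤ (d : ℝ) := by exact_mod_cast hd
  linarith

lemma dR_pos (hd : 3 ≤ d) : (0 : ℝ) < (d : ℝ) := by
  have : (3 : ℝ) ≤ (d : ℝ) := by exact_mod_cast hd
  linarith

lemma Q_pos (hd : 3 ≤ d) (ψ : ℝ) : 0 < Q d ψ := by
  have hm := m_ge hd
  have h1 := Real.neg_one_le_cos (d * ψ)
  have h2 := Real.cos_le_one (d * ψ)
  unfold Q
  nlinarith [sq_nonneg ((d:ℝ) - 1 + Real.cos (d*ψ))]

lemma Q_le (hd : 3 ≤ d) (ψ : ℝ) : Q d ψ ≤ (d : ℝ) ^ 2 := by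
  have hm := m_ge hd
  have h2 := Real.cos_le_one (d * ψ)
  unfold Q
  nlinarith

lemma R_pos (hd : 3 ≤ d) (ψ : ℝ) : 0 < R d ψ :=
  div_pos (Real.sqrt_pos.2 (Q_pos hd ψ)) (dR_pos hd)

lemma R_le_one (hd : 3 ≤ d) (ψ : ℝ) : R d ψ ≤ 1 := by
  have h : Real.sqrt (Q d ψ) ≤ (d : ℝ) := by
    calc Real.sqrt (Q d ψ) ≤ Real.sqrt ((d:ℝ)^2) := Real.sqrt_le_sqrt (Q_le hd ψ)
    _ = (d : ℝ) := by rw [Real.sqrt_sq (le_of_lt (dR_pos hd))]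
  rw [R, div_le_one (dR_pos hd)]
  exact h

lemma mC_pos (hd : 3 ≤ d) (ψ : ℝ) : 0 < ((d : ℝ) - 1) + Real.cos (d * ψ) := by
  have hm := m_ge hd
  have h1 := Real.neg_one_le_cos (d * ψ)
  linarith

lemma Q_eq (d : ℕ) (ψ : ℝ) :
    Q d ψ = (((d : ℝ) - 1) + Real.cos (d * ψ)) ^ 2 + Real.sin (d * ψ) ^ 2 := by
  have h := Real.sin_sq_add_cos_sq (d * ψ)
  unfold Q; nlinarith

lemma log_R (hd : 3 ≤ d) (ψ : ℝ) : Real.log (R d ψ) = - g d ψ := by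
  rw [R, g, Real.log_div (Real.sqrt_pos.2 (Q_pos hd ψ)).ne' (dR_pos hd).ne',
    Real.log_sqrt (Q_pos hd ψ).le]
  ring

lemma g_nonneg (hd : 3 ≤ d) (ψ : ℝ) : 0 ≤ g d ψ := by
  have h := Real.log_nonpos (R_pos hd ψ).le (R_le_one hd ψ)
  rw [log_R hd ψ] at h
  linarith

end basic

section trig

variable {d : ℕ}

lemma cos_A (hd : 3 ≤ d) (ψ : ℝ) :
    Real.cos (A d ψ) * Real.sqrt (Q d ψ) = ((d : ℝ) - 1) + Real.cos (d * ψ) := by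
  set m := (d : ℝ) - 1
  set C := Real.cos (d * ψ)
  set S := Real.sin (d * ψ)
  have hmc : 0 < m + C := mC_pos hd ψ
  have hQ : 0 < Q d ψ := Q_pos hd ψ
  have h1 : (1 : ℝ) + (S / (m + C)) ^ 2 = Q d ψ / (m + C) ^ 2 := by
    rw [Q_eq]; field_simp; rfl
  have h2 : Real.sqrt (1 + (S / (m + C)) ^ 2) = Real.sqrt (Q d ψ) / (m + C) := by
    rw [h1, Real.sqrt_div hQ.le, Real.sqrt_sq hmc.le]
  rw [A, Real.cos_neg, Real.cos_arctan, h2]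
  rw [one_div, inv_div]
  field_simp

lemma sin_A (hd : 3 ≤ d) (ψ : ℝ) :
    Real.sin (A d ψ) * Real.sqrt (Q d ψ) = - Real.sin (d * ψ) := by
  set m := (d : ℝ) - 1
  set C := Real.cos (d * ψ)
  set S := Real.sin (d * ψ)
  have hmc : 0 < m + C := mC_pos hd ψ
  have hQ : 0 < Q d ψ := Q_pos hd ψ
  have h1 : (1 : ℝ) + (S / (m + C)) ^ 2 = Q d ψ / (m + C) ^ 2 := by
    rw [Q_eq]; field_simp; rfl
  have h2 : Real.sqrt (1 + (S / (m + C)) ^ 2) = Real.sqrt (Q d ψ) / (m + C) := by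
    rw [h1, Real.sqrt_div hQ.le, Real.sqrt_sq hmc.le]
  have hQs : Real.sqrt (Q d ψ) ≠ 0 := by positivity
  rw [A, Real.sin_neg, Real.sin_arctan, h2]
  field_simp
  show -(S * (m + C) / (m + C)) = -S
  rw [mul_div_assoc, div_self hmc.ne', mul_one]

lemma x_eq (hd : 3 ≤ d) (ψ : ℝ) :
    ((d - 1 : ℝ) / d) * Real.cos ψ + (1 / d : ℝ) * Real.cos ((d - 1 : ℝ) * ψ)
      = R d ψ * Real.cos (L d ψ) := by
  have h1 := cos_A hd ψ
  have h2 := sin_A hd ψ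
  have hrw : ((d:ℝ) - 1) * ψ = (d:ℝ) * ψ - ψ := by ring
  have hd0 : ((d:ℝ)) ≠ 0 := (dR_pos hd).ne'
  rw [hrw, Real.cos_sub, R, L, Real.cos_add]
  field_simp
  linear_combination (-(Real.cos ψ)) * h1 + (Real.sin ψ) * h2

lemma y_eq (hd : 3 ≤ d) (ψ : ℝ) :
    ((d - 1 : ℝ) / d) * Real.sin ψ - (1 / d : ℝ) * Real.sin ((d - 1 : ℝ) * ψ)
      = R d ψ * Real.sin (L d ψ) := by
  have h1 := cos_A hd ψ
  have h2 := sin_A hd ψ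
  have hrw : ((d:ℝ) - 1) * ψ = (d:ℝ) * ψ - ψ := by ring
  have hd0 : ((d:ℝ)) ≠ 0 := (dR_pos hd).ne'
  rw [hrw, Real.sin_sub, R, L, Real.sin_add]
  field_simp
  linear_combination (-(Real.sin ψ)) * h1 - (Real.cos ψ) * h2

/-- Polar representation of the boundary curve. -/
lemma rep (hd : 3 ≤ d) (ψ : ℝ) :
    ((((d - 1 : ℝ) / d) * Real.cos ψ + (1 / d : ℝ) * Real.cos ((d - 1 : ℝ) * ψ) : ℝ) : ℂ) +
      ((((d - 1 : ℝ) / d) * Real.sin ψ - (1 / d : ℝ) * Real.sin ((d - 1 : ℝ) * ψ) : ℝ) : ℂ) * Complex.I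
      = (R d ψ : ℂ) * Complex.exp ((L d ψ : ℝ) * Complex.I) := by
  rw [x_eq hd ψ, y_eq hd ψ, Complex.exp_mul_I, ← Complex.ofReal_cos, ← Complex.ofReal_sin]
  push_cast
  ring

end trig

section periodic

variable {d : ℕ}

lemma arg_per (hd : 3 ≤ d) (ψ : ℝ) (k : ℤ) :
    (d : ℝ) * (ψ + k * (2 * π / d)) = d * ψ + k * (2 * π) := by
  have hd0 : ((d:ℝ)) ≠ 0 := (dR_pos hd).ne'
  field_simp

lemma Q_per (hd : 3 ≤ d) (ψ : ℝ) (k : ℤ) : Q d (ψ + k * (2 * π / d)) = Q d ψ := by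
  unfold Q
  rw [arg_per hd ψ k, Real.cos_add_int_mul_two_pi]

lemma R_per (hd : 3 ≤ d) (ψ : ℝ) (k : ℤ) : R d (ψ + k * (2 * π / d)) = R d ψ := by
  unfold R; rw [Q_per hd ψ k]

lemma A_per (hd : 3 ≤ d) (ψ : ℝ) (k : ℤ) : A d (ψ + k * (2 * π / d)) = A d ψ := by
  unfold A
  rw [arg_per hd ψ k, Real.cos_add_int_mul_two_pi, Real.sin_add_int_mul_two_pi]

lemma L_per (hd : 3 ≤ d) (ψ : ℝ) (k : ℤ) :
    L d (ψ + k * (2 * π / d)) = L d ψ + k * (2 * π / d) := by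
  unfold L
  rw [A_per hd ψ k]
  ring

lemma Q_neg (d : ℕ) (ψ : ℝ) : Q d (-ψ) = Q d ψ := by
  unfold Q
  rw [show (d:ℝ) * (-ψ) = -(d * ψ) by ring, Real.cos_neg]

lemma R_neg (d : ℕ) (ψ : ℝ) : R d (-ψ) = R d ψ := by
  unfold R; rw [Q_neg]

lemma g_neg (d : ℕ) (ψ : ℝ) : g d (-ψ) = g d ψ := by
  unfold g; rw [Q_neg]

lemma g_per (hd : 3 ≤ d) (ψ : ℝ) (k : ℤ) : g d (ψ + k * (2 * π / d)) = g d ψ := by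
  unfold g; rw [Q_per hd ψ k]

lemma L_neg (d : ℕ) (ψ : ℝ) : L d (-ψ) = - L d ψ := by
  unfold L A
  rw [show (d:ℝ) * (-ψ) = -(d * ψ) by ring, Real.cos_neg, Real.sin_neg, neg_div,
    Real.arctan_neg]
  ring

end periodic

section deriv

variable {d : ℕ}

lemma hasDerivAt_dmul (d : ℕ) (ψ : ℝ) : HasDerivAt (fun t : ℝ => (d : ℝ) * t) (d : ℝ) ψ := by
  simpa using (hasDerivAt_id ψ).const_mul (d : ℝ)

lemma hasDerivAt_S (d : ℕ) (ψ : ℝ) :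
    HasDerivAt (fun t : ℝ => Real.sin (d * t)) (Real.cos (d * ψ) * d) ψ :=
  (Real.hasDerivAt_sin ((d : ℝ) * ψ)).comp ψ (hasDerivAt_dmul d ψ)

lemma hasDerivAt_C (d : ℕ) (ψ : ℝ) :
    HasDerivAt (fun t : ℝ => Real.cos (d * t)) (-Real.sin (d * ψ) * d) ψ :=
  (Real.hasDerivAt_cos ((d : ℝ) * ψ)).comp ψ (hasDerivAt_dmul d ψ)

lemma hasDerivAt_Q (d : ℕ) (ψ : ℝ) :
    HasDerivAt (Q d) (-(2 * ((d : ℝ) - 1) * d * Real.sin (d * ψ))) ψ := by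
  have h2 := (((hasDerivAt_C d ψ).const_mul (2 * ((d : ℝ) - 1))).const_add
    (((d : ℝ) - 1) ^ 2)).add_const 1
  unfold Q
  refine h2.congr_deriv ?_
  ring

lemma hasDerivAt_g (hd : 3 ≤ d) (ψ : ℝ) : HasDerivAt (g d) (g' d ψ) ψ := by
  have hQ := Q_pos hd ψ
  have hlog : HasDerivAt (fun t => Real.log (Q d t))
      ((-(2 * ((d : ℝ) - 1) * d * Real.sin (d * ψ))) / Q d ψ) ψ := by
    have := (Real.hasDerivAt_log hQ.ne').comp ψ (hasDerivAt_Q d ψ)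
    exact this.congr_deriv (by ring)
  have h := (hlog.div_const 2).const_sub (Real.log d)
  refine h.congr_deriv ?_
  unfold g'
  field_simp

lemma hasDerivAt_L (hd : 3 ≤ d) (ψ : ℝ) : HasDerivAt (L d) (L' d ψ) ψ := by
  set m := (d : ℝ) - 1 with hm
  set C := Real.cos (d * ψ)
  set S := Real.sin (d * ψ)
  have hmc : 0 < m + C := mC_pos hd ψ
  have hQ : 0 < Q d ψ := Q_pos hd ψ
  have hden : HasDerivAt (fun t : ℝ => m + Real.cos (d * t)) (-S * d) ψ :=
    (hasDerivAt_C d ψ).const_add m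
  have hu : HasDerivAt (fun t : ℝ => Real.sin (d * t) / (m + Real.cos (d * t)))
      ((C * d * (m + C) - S * (-S * d)) / (m + C) ^ 2) ψ :=
    (hasDerivAt_S d ψ).div hden hmc.ne'
  have harct : HasDerivAt (fun t : ℝ =>
      Real.arctan (Real.sin (d * t) / (m + Real.cos (d * t))))
      ((1 / (1 + (S / (m + C)) ^ 2)) * ((C * d * (m + C) - S * (-S * d)) / (m + C) ^ 2)) ψ :=
    by have := (Real.hasDerivAt_arctan (S / (m + C))).comp ψ hu; exact this
  have hA : HasDerivAt (A d)
      (-((1 / (1 + (S / (m + C)) ^ 2)) * ((C * d * (m + C) - S * (-S * d)) / (m + C) ^ 2))) ψ :=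
    harct.neg
  have hL := (hasDerivAt_id ψ).add hA
  refine hL.congr_deriv ?_
  have h1 : (1 : ℝ) + (S / (m + C)) ^ 2 = Q d ψ / (m + C) ^ 2 := by
    rw [Q_eq]; field_simp; rfl
  have hpyth : S ^ 2 + C ^ 2 = 1 := Real.sin_sq_add_cos_sq (d * ψ)
  have hQdef : Q d ψ = m ^ 2 + 2 * m * C + 1 := rfl
  have e1 : C * (d:ℝ) * (m + C) - S * (-S * (d:ℝ)) = (d:ℝ) * (m * C + 1) := by
    linear_combination (d:ℝ) * hpyth
  have hd2 : (d : ℝ) = m + 1 := by rw [hm]; ring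
  have hQ' : (0:ℝ) < m ^ 2 + 2 * m * C + 1 := by rw [← hQdef]; exact hQ
  unfold L'
  show _ = ((d:ℝ) - 1) * ((d:ℝ) - 2) * (1 - C) / Q d ψ
  rw [h1, e1, hQdef, hd2]
  field_simp
  have hX : (m ^ 2 + 2 * m * C + 1) * (m ^ 2 + 2 * m * C + 1)⁻¹ = 1 := mul_inv_cancel₀ hQ'.ne'
  linear_combination -hX

lemma L_diff (hd : 3 ≤ d) : Differentiable ℝ (L d) :=
  fun ψ => (hasDerivAt_L hd ψ).differentiableAt

lemma g_diff (hd : 3 ≤ d) : Differentiable ℝ (g d) :=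
  fun ψ => (hasDerivAt_g hd ψ).differentiableAt

lemma L_cont (hd : 3 ≤ d) : Continuous (L d) := (L_diff hd).continuous

lemma g_cont (hd : 3 ≤ d) : Continuous (g d) := (g_diff hd).continuous

lemma one_sub_cos_pos {y : ℝ} (h0 : 0 < y) (h2 : y < 2 * π) : 0 < 1 - Real.cos y := by
  have hs : 0 < Real.sin (y / 2) :=
    Real.sin_pos_of_pos_of_lt_pi (by linarith) (by linarith)
  have hc : Real.cos y = 1 - 2 * Real.sin (y / 2) ^ 2 := by
    have h := Real.cos_two_mul (y / 2)
    have h2 := Real.sin_sq_add_cos_sq (y / 2)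
    have hy : (2:ℝ) * (y/2) = y := by ring
    rw [hy] at h
    linarith
  nlinarith

lemma L'_nonneg (hd : 3 ≤ d) (ψ : ℝ) : 0 ≤ L' d ψ := by
  have hm := m_ge hd
  have hQ := Q_pos hd ψ
  have h1 := Real.cos_le_one (d * ψ)
  unfold L'
  apply div_nonneg _ hQ.le
  exact mul_nonneg (mul_nonneg (by linarith) (by linarith)) (by linarith)

lemma L_mono (hd : 3 ≤ d) : Monotone (L d) := by
  apply monotone_of_deriv_nonneg (fun ψ => (hasDerivAt_L hd ψ).differentiableAt)
  intro x
  rw [(hasDerivAt_L hd x).deriv]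
  exact L'_nonneg hd x

lemma L_strict (hd : 3 ≤ d) : StrictMonoOn (L d) (Icc 0 (π / d)) := by
  apply strictMonoOn_of_deriv_pos (convex_Icc _ _) (L_cont hd).continuousOn
  intro x hx
  rw [interior_Icc] at hx
  rw [(hasDerivAt_L hd x).deriv]
  have hm := m_ge hd
  have hQ := Q_pos hd x
  have hdp := dR_pos hd
  have hx1 : 0 < (d:ℝ) * x := by
    have := hx.1; positivity
  have hx2 : (d:ℝ) * x < π := by
    have := hx.2
    calc (d:ℝ) * x < d * (π / d) := by
          exact mul_lt_mul_of_pos_left this hdp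
    _ = π := by field_simp
  have hcos := one_sub_cos_pos hx1 (by have := Real.pi_pos; linarith)
  unfold L'
  apply div_pos _ hQ
  exact mul_pos (mul_pos (by linarith) (by linarith)) hcos

lemma A_zero (hd : 3 ≤ d) : A d 0 = 0 := by
  unfold A
  norm_num

lemma L_zero (hd : 3 ≤ d) : L d 0 = 0 := by
  rw [L, A_zero hd]; ring

lemma L_half (hd : 3 ≤ d) : L d (π / d) = π / d := by
  have hd0 : ((d:ℝ)) ≠ 0 := (dR_pos hd).ne'
  have harg : (d : ℝ) * (π / d) = π := by field_simp
  rw [L, A, harg, Real.sin_pi]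
  norm_num

lemma Q_zero (hd : 3 ≤ d) : Q d 0 = (d:ℝ) ^ 2 := by
  unfold Q
  norm_num
  ring

lemma R_zero (hd : 3 ≤ d) : R d 0 = 1 := by
  rw [R, Q_zero hd, Real.sqrt_sq (dR_pos hd).le]
  field_simp

lemma g_zero (hd : 3 ≤ d) : g d 0 = 0 := by
  have h := log_R hd 0
  rw [R_zero hd, Real.log_one] at h
  linarith

lemma g_mono (hd : 3 ≤ d) : MonotoneOn (g d) (Icc 0 (π / d)) := by
  apply monotoneOn_of_deriv_nonneg (convex_Icc _ _) (g_cont hd).continuousOn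
  · intro x _
    exact ((hasDerivAt_g hd x).differentiableAt).differentiableWithinAt
  · intro x hx
    rw [interior_Icc] at hx
    rw [(hasDerivAt_g hd x).deriv]
    have hm := m_ge hd
    have hQ := Q_pos hd x
    have hdp := dR_pos hd
    have hx1 : 0 < (d:ℝ) * x := by have := hx.1; positivity
    have hx2 : (d:ℝ) * x < π := by
      have := hx.2
      calc (d:ℝ) * x < d * (π / d) := by exact mul_lt_mul_of_pos_left this hdp
      _ = π := by field_simp
    have hsin : 0 ≤ Real.sin (d * x) := (Real.sin_pos_of_pos_of_lt_pi hx1 hx2).le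
    unfold g'
    positivity

end deriv

section keys

variable {d : ℕ}

lemma keyT {u v : ℝ} (hu : 0 < u) (huv : u ≤ v) (hv : v < π) :
    Real.sin v * (1 - Real.cos u) ≤ Real.sin u * (1 - Real.cos v) := by
  have h1 : Real.sin v - Real.sin u
      = 2 * Real.sin ((v - u) / 2) * Real.cos ((v + u) / 2) := Real.sin_sub_sin v u
  have h2 : Real.sin (v - u) = 2 * Real.sin ((v - u) / 2) * Real.cos ((v - u) / 2) := by
    have h := Real.sin_two_mul ((v - u) / 2)
    rw [show 2 * ((v - u) / 2) = v - u by ring] at h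
    exact h
  have h3 : Real.sin (v - u) = Real.sin v * Real.cos u - Real.cos v * Real.sin u :=
    Real.sin_sub v u
  have h4 : 0 ≤ Real.sin ((v - u) / 2) :=
    Real.sin_nonneg_of_nonneg_of_le_pi (by linarith) (by linarith [Real.pi_pos])
  have h5 : Real.cos ((v + u) / 2) ≤ Real.cos ((v - u) / 2) :=
    Real.cos_le_cos_of_nonneg_of_le_pi (by linarith) (by linarith) (by linarith)
  nlinarith [mul_le_mul_of_nonneg_left h5 h4]

lemma mvt_ratio (hd : 3 ≤ d) {a b : ℝ} (hab : a < b) :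
    ∃ c ∈ Ioo a b, (g d b - g d a) * L' d c = (L d b - L d a) * g' d c :=
  exists_ratio_hasDerivAt_eq_ratio_slope (L d) (L' d) hab (L_cont hd).continuousOn
    (fun x _ => hasDerivAt_L hd x) (g d) (g' d) (g_cont hd).continuousOn
    (fun x _ => hasDerivAt_g hd x)

lemma mvt_clear (hd : 3 ≤ d) {a b : ℝ} (hab : a < b) :
    ∃ c ∈ Ioo a b,
      (g d b - g d a) * (((d:ℝ) - 1) * ((d:ℝ) - 2) * (1 - Real.cos (d * c)))
        = (L d b - L d a) * (((d:ℝ) - 1) * (d:ℝ) * Real.sin (d * c)) := by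
  obtain ⟨c, hc, hEq⟩ := mvt_ratio hd hab
  refine ⟨c, hc, ?_⟩
  have hQ : Q d c ≠ 0 := (Q_pos hd c).ne'
  have e : (g d b - g d a) * (((d:ℝ) - 1) * ((d:ℝ) - 2) * (1 - Real.cos (d * c)))
      = ((g d b - g d a) * L' d c) * Q d c := by
    unfold L'; field_simp
  have e2 : (L d b - L d a) * (((d:ℝ) - 1) * (d:ℝ) * Real.sin (d * c))
      = ((L d b - L d a) * g' d c) * Q d c := by
    unfold g'; field_simp
  rw [e, e2, hEq]

lemma dmul_mem (hd : 3 ≤ d) {x : ℝ} (h0 : 0 < x) (h1 : x < π / d) :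
    0 < (d:ℝ) * x ∧ (d:ℝ) * x < π := by
  have hdp := dR_pos hd
  constructor
  · positivity
  · calc (d:ℝ) * x < d * (π / d) := mul_lt_mul_of_pos_left h1 hdp
    _ = π := by field_simp

lemma L_mem (hd : 3 ≤ d) {x : ℝ} (hx : x ∈ Icc 0 (π / d)) : L d x ∈ Icc 0 (π / d) := by
  constructor
  · have := L_mono hd (a := 0) (b := x) hx.1
    rw [L_zero hd] at this; exact this
  · have := L_mono hd (a := x) (b := π / d) hx.2
    rw [L_half hd] at this; exact this

lemma key2aux (hd : 3 ≤ d) {a b c : ℝ} (haI : a ∈ Icc 0 (π / d)) (hbI : b ∈ Icc 0 (π / d))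
    (hcI : c ∈ Icc 0 (π / d)) (hLsum : L d c = L d a + L d b) (hba : b ≤ a) :
    g d c ≤ g d a + g d b := by
  have hh : 0 < π / d := div_pos Real.pi_pos (dR_pos hd)
  have hgb0 : 0 ≤ g d b := g_nonneg hd b
  rcases eq_or_lt_of_le hbI.1 with hb0 | hb0
  · -- b = 0
    have hb0' : b = 0 := hb0.symm
    subst hb0'
    rw [L_zero hd] at hLsum
    have hca : c = a := (L_strict hd).injOn hcI haI (by linarith)
    rw [hca, g_zero hd]
    linarith
  · -- 0 < b
    have hLb : 0 < L d b := by
      have := L_strict hd (left_mem_Icc.2 hh.le) hbI hb0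
      rw [L_zero hd] at this; exact this
    have hac : a < c := by
      by_contra hcon
      push_neg at hcon
      have := L_mono hd hcon
      linarith
    obtain ⟨η, hη, E1⟩ := mvt_clear hd hac
    obtain ⟨ξ, hξ, E2⟩ := mvt_clear hd hb0
    rw [L_zero hd, g_zero hd] at E2
    simp only [sub_zero] at E2
    have hξm := dmul_mem hd hξ.1 (lt_of_lt_of_le hξ.2 hbI.2)
    have hηm := dmul_mem hd (lt_of_le_of_lt haI.1 hη.1) (lt_of_lt_of_le hη.2 hcI.2)
    have hKT : Real.sin ((d:ℝ) * η) * (1 - Real.cos ((d:ℝ) * ξ))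
        ≤ Real.sin ((d:ℝ) * ξ) * (1 - Real.cos ((d:ℝ) * η)) := by
      apply keyT hξm.1 _ hηm.2
      have : ξ < η := lt_of_lt_of_le hξ.2 (hba.trans hη.1.le)
      have hdp := dR_pos hd
      nlinarith
    -- positivity of denominators
    have hcξ : 0 < 1 - Real.cos ((d:ℝ) * ξ) :=
      one_sub_cos_pos hξm.1 (by linarith [hξm.2, Real.pi_pos])
    have hcη : 0 < 1 - Real.cos ((d:ℝ) * η) :=
      one_sub_cos_pos hηm.1 (by linarith [hηm.2, Real.pi_pos])
    have hm := m_ge hd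
    have hdp := dR_pos hd
    have hLba : L d c - L d a = L d b := by linarith
    rw [hLba] at E1
    -- multiply E1 by (1-cos dξ), E2 by (1-cos dη) and compare
    have E1' := congrArg (fun t => t * (1 - Real.cos ((d:ℝ) * ξ))) E1
    have E2' := congrArg (fun t => t * (1 - Real.cos ((d:ℝ) * η))) E2
    have hLb0 : (0:ℝ) ≤ L d b * (((d:ℝ) - 1) * (d:ℝ)) := by positivity
    have base := mul_le_mul_of_nonneg_left hKT hLb0
    have hF : 0 < ((d:ℝ) - 1) * ((d:ℝ) - 2) * (1 - Real.cos ((d:ℝ) * η)) * (1 - Real.cos ((d:ℝ) * ξ)) := by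
      have h1 : (0:ℝ) < (d:ℝ) - 1 := by linarith
      have h2 : (0:ℝ) < (d:ℝ) - 2 := by linarith
      positivity
    have hfinal : (g d c - g d a) * (((d:ℝ) - 1) * ((d:ℝ) - 2) * (1 - Real.cos ((d:ℝ) * η)) * (1 - Real.cos ((d:ℝ) * ξ)))
        ≤ g d b * (((d:ℝ) - 1) * ((d:ℝ) - 2) * (1 - Real.cos ((d:ℝ) * η)) * (1 - Real.cos ((d:ℝ) * ξ))) := by
      calc (g d c - g d a) * (((d:ℝ) - 1) * ((d:ℝ) - 2) * (1 - Real.cos ((d:ℝ) * η)) * (1 - Real.cos ((d:ℝ) * ξ)))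
          = (g d c - g d a) * (((d:ℝ) - 1) * ((d:ℝ) - 2) * (1 - Real.cos ((d:ℝ) * η))) * (1 - Real.cos ((d:ℝ) * ξ)) := by ring
        _ = L d b * (((d:ℝ) - 1) * (d:ℝ) * Real.sin ((d:ℝ) * η)) * (1 - Real.cos ((d:ℝ) * ξ)) := E1'
        _ = L d b * (((d:ℝ) - 1) * (d:ℝ)) * (Real.sin ((d:ℝ) * η) * (1 - Real.cos ((d:ℝ) * ξ))) := by ring
        _ ≤ L d b * (((d:ℝ) - 1) * (d:ℝ)) * (Real.sin ((d:ℝ) * ξ) * (1 - Real.cos ((d:ℝ) * η))) := base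
        _ = g d b * (((d:ℝ) - 1) * ((d:ℝ) - 2) * (1 - Real.cos ((d:ℝ) * ξ))) * (1 - Real.cos ((d:ℝ) * η)) := by
            rw [E2']; ring
        _ = g d b * (((d:ℝ) - 1) * ((d:ℝ) - 2) * (1 - Real.cos ((d:ℝ) * η)) * (1 - Real.cos ((d:ℝ) * ξ))) := by ring
    have := le_of_mul_le_mul_right hfinal hF
    linarith

/-- Subadditivity on the fundamental half-period. -/
lemma key2 (hd : 3 ≤ d) {a b c : ℝ} (haI : a ∈ Icc 0 (π / d)) (hbI : b ∈ Icc 0 (π / d))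
    (hcI : c ∈ Icc 0 (π / d)) (hLsum : L d c = L d a + L d b) :
    g d c ≤ g d a + g d b := by
  -- wlog b ≤ a
  rcases le_total b a with hba | hab
  · exact key2aux hd haI hbI hcI hLsum hba
  · have := key2aux hd hbI haI hcI (by linarith) hab
    linarith

/-- Star-shapedness of `g` relative to the half-period endpoint. -/
lemma star (hd : 3 ≤ d) {x : ℝ} (hx : x ∈ Icc 0 (π / d)) :
    L d x * g d (π / d) ≤ (π / d) * g d x := by
  have hh : 0 < π / d := div_pos Real.pi_pos (dR_pos hd)
  rcases eq_or_lt_of_le hx.1 with hx0 | hx0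
  · rw [← hx0, L_zero hd, g_zero hd]
    simp
  rcases eq_or_lt_of_le hx.2 with hx1 | hx1
  · rw [hx1, L_half hd]
  -- 0 < x < π/d
  obtain ⟨ξ, hξ, E2⟩ := mvt_clear hd hx0
  rw [L_zero hd, g_zero hd] at E2
  simp only [sub_zero] at E2
  obtain ⟨η, hη, E1⟩ := mvt_clear hd hx1
  rw [L_half hd] at E1
  have hξm := dmul_mem hd hξ.1 (lt_trans hξ.2 hx1)
  have hηm := dmul_mem hd (lt_trans hx0 hη.1) hη.2
  have hKT : Real.sin ((d:ℝ) * η) * (1 - Real.cos ((d:ℝ) * ξ))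
      ≤ Real.sin ((d:ℝ) * ξ) * (1 - Real.cos ((d:ℝ) * η)) := by
    apply keyT hξm.1 _ hηm.2
    have : ξ < η := lt_trans hξ.2 hη.1
    have hdp := dR_pos hd
    nlinarith
  have hcξ : 0 < 1 - Real.cos ((d:ℝ) * ξ) :=
    one_sub_cos_pos hξm.1 (by linarith [hξm.2, Real.pi_pos])
  have hcη : 0 < 1 - Real.cos ((d:ℝ) * η) :=
    one_sub_cos_pos hηm.1 (by linarith [hηm.2, Real.pi_pos])
  have hm := m_ge hd
  have hdp := dR_pos hd
  have hLx0 : 0 ≤ L d x := (L_mem hd hx).1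
  have hLx1 : L d x ≤ π / d := (L_mem hd hx).2
  have E1' := congrArg (fun t => t * (L d x * (1 - Real.cos ((d:ℝ) * ξ)))) E1
  have E2' := congrArg (fun t => t * ((π / d - L d x) * (1 - Real.cos ((d:ℝ) * η)))) E2
  have hLb0 : (0:ℝ) ≤ L d x * (π / d - L d x) * (((d:ℝ) - 1) * (d:ℝ)) := by
    have h1 : (0:ℝ) ≤ π / d - L d x := by linarith
    positivity
  have base := mul_le_mul_of_nonneg_left hKT hLb0
  have hF : 0 < ((d:ℝ) - 1) * ((d:ℝ) - 2) * (1 - Real.cos ((d:ℝ) * η)) * (1 - Real.cos ((d:ℝ) * ξ)) := by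
    have h1 : (0:ℝ) < (d:ℝ) - 1 := by linarith
    have h2 : (0:ℝ) < (d:ℝ) - 2 := by linarith
    positivity
  have hfinal : (L d x * (g d (π / d) - g d x)) *
      (((d:ℝ) - 1) * ((d:ℝ) - 2) * (1 - Real.cos ((d:ℝ) * η)) * (1 - Real.cos ((d:ℝ) * ξ)))
      ≤ ((π / d - L d x) * g d x) *
      (((d:ℝ) - 1) * ((d:ℝ) - 2) * (1 - Real.cos ((d:ℝ) * η)) * (1 - Real.cos ((d:ℝ) * ξ))) := by
    calc (L d x * (g d (π / d) - g d x)) *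
        (((d:ℝ) - 1) * ((d:ℝ) - 2) * (1 - Real.cos ((d:ℝ) * η)) * (1 - Real.cos ((d:ℝ) * ξ)))
        = ((g d (π / d) - g d x) * (((d:ℝ) - 1) * ((d:ℝ) - 2) * (1 - Real.cos ((d:ℝ) * η)))) *
            (L d x * (1 - Real.cos ((d:ℝ) * ξ))) := by ring
      _ = ((π / d - L d x) * (((d:ℝ) - 1) * (d:ℝ) * Real.sin ((d:ℝ) * η))) *
            (L d x * (1 - Real.cos ((d:ℝ) * ξ))) := E1'
      _ = L d x * (π / d - L d x) * (((d:ℝ) - 1) * (d:ℝ)) *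
            (Real.sin ((d:ℝ) * η) * (1 - Real.cos ((d:ℝ) * ξ))) := by ring
      _ ≤ L d x * (π / d - L d x) * (((d:ℝ) - 1) * (d:ℝ)) *
            (Real.sin ((d:ℝ) * ξ) * (1 - Real.cos ((d:ℝ) * η))) := base
      _ = (L d x * (((d:ℝ) - 1) * (d:ℝ) * Real.sin ((d:ℝ) * ξ))) *
            ((π / d - L d x) * (1 - Real.cos ((d:ℝ) * η))) := by ring
      _ = (g d x * (((d:ℝ) - 1) * ((d:ℝ) - 2) * (1 - Real.cos ((d:ℝ) * ξ)))) *
            ((π / d - L d x) * (1 - Real.cos ((d:ℝ) * η))) := E2'.symm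
      _ = ((π / d - L d x) * g d x) *
            (((d:ℝ) - 1) * ((d:ℝ) - 2) * (1 - Real.cos ((d:ℝ) * η)) * (1 - Real.cos ((d:ℝ) * ξ))) := by
          ring
  have := le_of_mul_le_mul_right hfinal hF
  nlinarith

/-- The wrap-around case. -/
lemma key3 (hd : 3 ≤ d) {a b c : ℝ} (haI : a ∈ Icc 0 (π / d)) (hbI : b ∈ Icc 0 (π / d))
    (hcI : c ∈ Icc 0 (π / d)) (hsum : L d a + L d b + L d c = 2 * (π / d)) :
    g d c ≤ g d a + g d b := by
  have hh : 0 < π / d := div_pos Real.pi_pos (dR_pos hd)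
  have hgh0 : 0 ≤ g d (π / d) := g_nonneg hd _
  have hgc : g d c ≤ g d (π / d) :=
    (g_mono hd) hcI (right_mem_Icc.2 hh.le) hcI.2
  have sa := star hd haI
  have sb := star hd hbI
  have hLc : L d c ≤ π / d := (L_mem hd hcI).2
  -- π/d * (g a + g b) ≥ (L a + L b) * g h = (2h - L c) * g h ≥ h * g h
  have h1 : (π / d) * (g d a + g d b) ≥ (π / d) * g d (π / d) := by
    have h2 : (L d a + L d b) * g d (π / d) = (2 * (π / d) - L d c) * g d (π / d) := by
      rw [show L d a + L d b = 2 * (π / d) - L d c by linarith]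
    nlinarith [mul_nonneg (sub_nonneg.2 hLc) hgh0]
  have h3 : g d (π / d) ≤ g d a + g d b := le_of_mul_le_mul_left (by linarith) hh
  linarith

lemma Kbound {h : ℝ} (hh : 0 < h) {K : ℤ} (h1 : -3 * h ≤ (K : ℝ) * (2 * h))
    (h2 : (K : ℝ) * (2 * h) ≤ 3 * h) : K = -1 ∨ K = 0 ∨ K = 1 := by
  have hK1 : (K : ℝ) < 2 := by nlinarith
  have hK2 : (-2 : ℝ) < (K : ℝ) := by nlinarith
  have h3 : K < 2 := by exact_mod_cast hK1
  have h4 : -2 < K := by exact_mod_cast hK2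
  omega

set_option maxHeartbeats 1600000 in
/-- Master case analysis: any sign/translation relation between `L`-values in the
fundamental domain yields the subadditivity inequality for `g`. -/
lemma key_master (hd : 3 ≤ d) {a b c : ℝ} (haI : a ∈ Icc 0 (π / d)) (hbI : b ∈ Icc 0 (π / d))
    (hcI : c ∈ Icc 0 (π / d)) {ε₁ ε₂ ε₃ : ℝ} (hε₁ : ε₁ = 1 ∨ ε₁ = -1)
    (hε₂ : ε₂ = 1 ∨ ε₂ = -1) (hε₃ : ε₃ = 1 ∨ ε₃ = -1) {K : ℤ}
    (heq : ε₁ * L d a + ε₂ * L d b = ε₃ * L d c + (K : ℝ) * (2 * π / d)) :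
    g d c ≤ g d a + g d b := by
  have hh : 0 < π / d := div_pos Real.pi_pos (dR_pos hd)
  have hp : (2 : ℝ) * π / d = 2 * (π / d) := by ring
  rw [hp] at heq
  obtain ⟨hx0, hx1⟩ := L_mem hd haI
  obtain ⟨hy0, hy1⟩ := L_mem hd hbI
  obtain ⟨hz0, hz1⟩ := L_mem hd hcI
  have hga0 : 0 ≤ g d a := g_nonneg hd a
  have hgb0 : 0 ≤ g d b := g_nonneg hd b
  rcases hε₁ with rfl | rfl <;> rcases hε₂ with rfl | rfl <;> rcases hε₃ with rfl | rfl <;>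
    simp only [one_mul, neg_one_mul, neg_mul] at heq <;>
  · have hK : K = -1 ∨ K = 0 ∨ K = 1 :=
      Kbound hh (by linarith) (by linarith)
    rcases hK with rfl | rfl | rfl <;> push_cast at heq <;>
    first
      | linarith
      | (exact key2 hd haI hbI hcI (by linarith))
      | (exact key3 hd haI hbI hcI (by linarith))
      | (have hza : c ≤ a := ((L_strict hd).le_iff_le hcI haI).1 (by linarith)
         linarith [(g_mono hd) hcI haI hza])
      | (have hzb : c ≤ b := ((L_strict hd).le_iff_le hcI hbI).1 (by linarith)
         linarith [(g_mono hd) hcI hbI hzb])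

end keys

section core

variable {d : ℕ}

/-- Reduce an arbitrary parameter to the fundamental half-period `[0, π/d]`. -/
lemma exists_normal (hd : 3 ≤ d) (θ : ℝ) :
    ∃ a : ℝ, a ∈ Icc 0 (π / d) ∧ g d θ = g d a ∧
      ∃ ε : ℝ, (ε = 1 ∨ ε = -1) ∧ ∃ k : ℤ, L d θ = ε * L d a + k * (2 * π / d) := by
  have hdp := dR_pos hd
  have hp : (0 : ℝ) < 2 * π / d := by positivity
  set k := ⌊θ / (2 * π / d)⌋ with hk
  have h0 : 0 ≤ θ - k * (2 * π / d) := Int.sub_floor_div_mul_nonneg θ hp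
  have h1 : θ - k * (2 * π / d) < 2 * π / d := Int.sub_floor_div_mul_lt θ hp
  set θ' := θ - k * (2 * π / d) with hθ'
  have hθ : θ = θ' + k * (2 * π / d) := by ring
  by_cases hcase : θ' ≤ π / d
  · refine ⟨θ', ⟨h0, hcase⟩, ?_, 1, Or.inl rfl, k, ?_⟩
    · rw [hθ, g_per hd θ' k]
    · rw [hθ, L_per hd θ' k]; ring
  · push_neg at hcase
    have ha0 : 0 ≤ 2 * π / d - θ' := by linarith
    have ha1 : 2 * π / d - θ' ≤ π / d := by
      have : π / d + π / d = 2 * π / d := by ring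
      linarith
    have hrw : θ = -(2 * π / d - θ') + ((k + 1 : ℤ) : ℝ) * (2 * π / d) := by
      push_cast; ring
    refine ⟨2 * π / d - θ', ⟨ha0, ha1⟩, ?_, -1, Or.inr rfl, k + 1, ?_⟩
    · rw [hrw, g_per hd _ (k + 1), g_neg]
    · rw [hrw, L_per hd _ (k + 1), L_neg]
      push_cast
      ring_nf
  
/-- The core inequality: superadditivity of the logarithmic radius along matched arguments. -/
lemma core (hd : 3 ≤ d) (θ φ ψ : ℝ) (hL : L d ψ = L d θ + L d φ) :
    R d θ * R d φ ≤ R d ψ := by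
  suffices hg : g d ψ ≤ g d θ + g d φ by
    have hlog : Real.log (R d θ * R d φ) ≤ Real.log (R d ψ) := by
      rw [Real.log_mul (R_pos hd θ).ne' (R_pos hd φ).ne', log_R hd, log_R hd, log_R hd]
      linarith
    exact (Real.log_le_log_iff (mul_pos (R_pos hd θ) (R_pos hd φ)) (R_pos hd ψ)).1 hlog
  obtain ⟨a, haI, hga, ε₁, hε₁, k₁, e₁⟩ := exists_normal hd θ
  obtain ⟨b, hbI, hgb, ε₂, hε₂, k₂, e₂⟩ := exists_normal hd φ
  obtain ⟨c, hcI, hgc, ε₃, hε₃, k₃, e₃⟩ := exists_normal hd ψ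
  rw [hga, hgb, hgc]
  apply key_master hd haI hbI hcI hε₁ hε₂ hε₃ (K := k₃ - k₁ - k₂)
  rw [e₁, e₂, e₃] at hL
  push_cast
  linear_combination -hL

/-- Surjectivity of the total-argument function. -/
lemma exists_psi (hd : 3 ≤ d) (T : ℝ) : ∃ ψ ∈ Icc (T - π) (T + π), L d ψ = T := by
  have hπ := Real.pi_pos
  have hAbound : ∀ x : ℝ, -(π / 2) < A d x ∧ A d x < π / 2 := by
    intro x
    unfold A
    constructor
    · simpa using neg_lt_neg (Real.arctan_lt_pi_div_two _)
    · simpa using neg_lt_neg (Real.neg_pi_div_two_lt_arctan _)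
  have h1 : L d (T - π) ≤ T := by
    have := (hAbound (T - π)).2
    unfold L; linarith
  have h2 : T ≤ L d (T + π) := by
    have := (hAbound (T + π)).1
    unfold L; linarith
  have hsub : T ∈ Icc (L d (T - π)) (L d (T + π)) := ⟨h1, h2⟩
  have := intermediate_value_Icc (by linarith : T - π ≤ T + π) (L_cont hd).continuousOn hsub
  obtain ⟨ψ, hψI, hψ⟩ := this
  exact ⟨ψ, hψI, hψ⟩

end core

section main

variable {d : ℕ}

lemma mul_mem_ge3 (hd : 3 ≤ d) {z₁ z₂ : ℂ} (h₁ : z₁ ∈ Hypocycloid d)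
    (h₂ : z₂ ∈ Hypocycloid d) : z₁ * z₂ ∈ Hypocycloid d := by
  obtain ⟨s₁, θ₁, hs₁, hθ₁, rfl⟩ := h₁
  obtain ⟨s₂, θ₂, hs₂, hθ₂, rfl⟩ := h₂
  have hπ := Real.pi_pos
  have hdp := dR_pos hd
  obtain ⟨ψ₀, _, hψ₀⟩ := exists_psi hd (L d θ₁ + L d θ₂)
  have hRcore : R d θ₁ * R d θ₂ ≤ R d ψ₀ := core hd θ₁ θ₂ ψ₀ hψ₀
  set k := ⌊ψ₀ / (2 * π)⌋ with hk
  set ψ := ψ₀ - k * (2 * π) with hψdef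
  have hψmem : ψ ∈ Icc (0:ℝ) (2 * π) :=
    ⟨Int.sub_floor_div_mul_nonneg ψ₀ (by positivity),
     (Int.sub_floor_div_mul_lt ψ₀ (by positivity)).le⟩
  have hψ₀eq : ψ₀ = ψ + ((k * d : ℤ) : ℝ) * (2 * π / d) := by
    push_cast
    field_simp
    rw [hψdef]
    ring
  have hR : R d ψ₀ = R d ψ := by rw [hψ₀eq, R_per hd]
  have hLψ : L d ψ₀ = L d ψ + ((k * d : ℤ) : ℝ) * (2 * π / d) := by
    rw [hψ₀eq, L_per hd]
  have hsum : L d θ₁ + L d θ₂ = L d ψ + (k : ℝ) * (2 * π) := by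
    have h2 : ((k * d : ℤ) : ℝ) * (2 * π / d) = (k : ℝ) * (2 * π) := by
      push_cast; field_simp
    rw [← hψ₀, hLψ, h2]
  have hRψ : 0 < R d ψ := R_pos hd ψ
  refine ⟨s₁ * s₂ * (R d θ₁ * R d θ₂ / R d ψ), ψ, ⟨?_, ?_⟩, hψmem, ?_⟩
  · exact mul_nonneg (mul_nonneg hs₁.1 hs₂.1)
      (div_pos (mul_pos (R_pos hd θ₁) (R_pos hd θ₂)) hRψ).le
  · have hratio : R d θ₁ * R d θ₂ / R d ψ ≤ 1 := by
      rw [div_le_one hRψ, ← hR]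
      exact hRcore
    have hratio0 : 0 ≤ R d θ₁ * R d θ₂ / R d ψ :=
      (div_pos (mul_pos (R_pos hd θ₁) (R_pos hd θ₂)) hRψ).le
    exact mul_le_one₀ (mul_le_one₀ hs₁.2 hs₂.1 hs₂.2) hratio0 hratio
  · rw [rep hd θ₁, rep hd θ₂, rep hd ψ]
    have hsumC : (Complex.ofReal (L d θ₁)) * Complex.I + (Complex.ofReal (L d θ₂)) * Complex.I
        = (Complex.ofReal (L d ψ)) * Complex.I + (k : ℂ) * (2 * (π : ℂ) * Complex.I) := by
      have hc := congrArg (Complex.ofReal) hsum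
      push_cast at hc
      linear_combination Complex.I * hc
    have key : Complex.exp ((L d θ₁ : ℝ) * Complex.I) * Complex.exp ((L d θ₂ : ℝ) * Complex.I)
        = Complex.exp ((L d ψ : ℝ) * Complex.I) := by
      rw [← Complex.exp_add, hsumC, Complex.exp_add, Complex.exp_int_mul_two_pi_mul_I, mul_one]
    have hRne : ((R d ψ : ℝ) : ℂ) ≠ 0 := by
      exact_mod_cast hRψ.ne'
    rw [← key]
    push_cast
    field_simp

lemma one_mem' (hd : 2 ≤ d) : (1 : ℂ) ∈ Hypocycloid d := by
  have hd0 : (0:ℝ) < (d : ℝ) := by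
    have : (2:ℝ) ≤ (d:ℝ) := by exact_mod_cast hd
    linarith
  have hπ := Real.pi_pos
  have hdC : ((d:ℝ) : ℂ) ≠ 0 := by exact_mod_cast hd0.ne'
  refine ⟨1, 0, ⟨zero_le_one, le_refl 1⟩, ⟨le_refl 0, by positivity⟩, ?_⟩
  norm_num
  field_simp
  first
    | exact (div_self hdC).symm
    | exact (div_self (by exact_mod_cast hd0.ne' : ((d:ℝ)) ≠ 0)).symm
    | ring
  exact (mul_inv_cancel₀ (by exact_mod_cast hd0.ne')).symm

lemma mem_two_iff {z : ℂ} : z ∈ Hypocycloid 2 ↔ ∃ r : ℝ, r ∈ Icc (-1:ℝ) 1 ∧ z = (r:ℂ) := by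
  have hπ := Real.pi_pos
  constructor
  · rintro ⟨s, θ, hs, hθ, rfl⟩
    refine ⟨s * Real.cos θ, ⟨?_, ?_⟩, ?_⟩
    · nlinarith [Real.neg_one_le_cos θ, Real.cos_le_one θ, hs.1, hs.2]
    · nlinarith [Real.neg_one_le_cos θ, Real.cos_le_one θ, hs.1, hs.2]
    · push_cast
      ring_nf
  · rintro ⟨r, hr, rfl⟩
    rcases le_or_gt 0 r with h | h
    · refine ⟨r, 0, ⟨h, hr.2⟩, ⟨le_refl 0, by positivity⟩, ?_⟩
      push_cast
      norm_num
      try ring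
    · refine ⟨-r, π, ⟨by linarith, by linarith [hr.1]⟩, ⟨hπ.le, by linarith⟩, ?_⟩
      push_cast
      norm_num [Real.cos_pi, Real.sin_pi]
      try ring

lemma mul_mem_two {z₁ z₂ : ℂ} (h₁ : z₁ ∈ Hypocycloid 2) (h₂ : z₂ ∈ Hypocycloid 2) :
    z₁ * z₂ ∈ Hypocycloid 2 := by
  rw [mem_two_iff] at h₁ h₂ ⊢
  obtain ⟨r₁, hr₁, rfl⟩ := h₁
  obtain ⟨r₂, hr₂, rfl⟩ := h₂
  refine ⟨r₁ * r₂, ⟨?_, ?_⟩, by push_cast; ring⟩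
  · nlinarith [hr₁.1, hr₁.2, hr₂.1, hr₂.2]
  · nlinarith [hr₁.1, hr₁.2, hr₂.1, hr₂.2]

end main

end HypoAux

open Pointwise in
/-- For every `d ≥ 2`, the unit `d`-hypocycloid region is closed under complex
multiplication; equivalently, it is idempotent with respect to the Minkowski product:
`H_d ⊠ H_d = H_d`. -/
theorem hypocycloid_mul_closed {d : ℕ} (hd : 2 ≤ d) :
    (∀ z₁ ∈ Hypocycloid d, ∀ z₂ ∈ Hypocycloid d, z₁ * z₂ ∈ Hypocycloid d) ∧
    Hypocycloid d * Hypocycloid d = Hypocycloid d := by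
  have hmul : ∀ z₁ ∈ Hypocycloid d, ∀ z₂ ∈ Hypocycloid d, z₁ * z₂ ∈ Hypocycloid d := by
    rcases eq_or_lt_of_le hd with h2 | h3
    · have hd2 : d = 2 := h2.symm
      subst hd2
      intro z₁ h₁ z₂ h₂
      exact HypoAux.mul_mem_two h₁ h₂
    · have hd3 : 3 ≤ d := h3
      intro z₁ h₁ z₂ h₂
      exact HypoAux.mul_mem_ge3 hd3 h₁ h₂
  refine ⟨hmul, ?_⟩
  apply Set.Subset.antisymm
  · rintro z hz
    rw [Set.mem_mul] at hz
    obtain ⟨a, ha, b, hb, rfl⟩ := hz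
    exact hmul a ha b hb
  · intro z hz
    have h1 : (1 : ℂ) ∈ Hypocycloid d := HypoAux.one_mem' hd
    have := Set.mul_mem_mul hz h1
    simpa using this
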